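/- arXiv:1104.4892 — 2 statements merged into one kernel-verified Lean document; each statement's English description precedes it below -/
import Mathlib

section
/- Let G be a graph with nonnegative integral edge weights and let w be a positive integer with w ≥ girth(G). Then girth(round(G, w)) = girth(G). -/
open SimpleGraph

variable {V : Type*}

/-- The weight of a walk: the sum of the weights of its edges. -/
def walkWeight {G : SimpleGraph V} (w : Sym2 V → ℕ) {u v : V} (p : G.Walk u v) : ℕ :=
  (p.edges.map w).sum

/-- The girth of a weighted graph: the minimum total weight of a simple cycle
(`⊤` if there is no cycle). -/
noncomputable def wgirth (G : SimpleGraph V) (w : Sym2 V → ℕ) : ℕ∞ :=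
  sInf {n : ℕ∞ | ∃ (u : V) (p : G.Walk u u), p.IsCycle ∧ n = (walkWeight w p : ℕ∞)}

/-- Weighted shortest-path distance (`⊤` if there is no walk). -/
noncomputable def wdist (G : SimpleGraph V) (w : Sym2 V → ℕ) (u v : V) : ℕ∞ :=
  sInf {n : ℕ∞ | ∃ p : G.Walk u v, n = (walkWeight w p : ℕ∞)}

section Expand

variable [LinearOrder V]

/-- Internal vertices of the expanded version of `(G, w)`: for each edge `{a, b}`
with `a < b` of weight `k = w s(a,b)`, the `k - 1` internal vertices of the
replacing path, indexed by `1 ≤ i ≤ k - 1`. -/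
abbrev InnerVert (G : SimpleGraph V) (w : Sym2 V → ℕ) : Type _ :=
  {x : V × V × ℕ // x.1 < x.2.1 ∧ G.Adj x.1 x.2.1 ∧ 0 < x.2.2 ∧ x.2.2 < w s(x.1, x.2.1)}

/-- One direction of the adjacency of the (pre-contraction) expanded graph. -/
def preRel (G : SimpleGraph V) (w : Sym2 V → ℕ) :
    (V ⊕ InnerVert G w) → (V ⊕ InnerVert G w) → Prop
  | .inl u, .inl v => G.Adj u v ∧ w s(u, v) = 1
  | .inl u, .inr x =>
      (u = x.val.1 ∧ x.val.2.2 = 1) ∨ (u = x.val.2.1 ∧ x.val.2.2 + 1 = w s(x.val.1, x.val.2.1))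
  | .inr x, .inr y => x.val.1 = y.val.1 ∧ x.val.2.1 = y.val.2.1 ∧ x.val.2.2 + 1 = y.val.2.2
  | _, _ => False

/-- The expanded graph before contracting the zero-weight edges: every edge of
weight `k ≥ 1` is replaced by a path of `k` unit edges. -/
def preExpand (G : SimpleGraph V) (w : Sym2 V → ℕ) : SimpleGraph (V ⊕ InnerVert G w) :=
  SimpleGraph.fromRel (preRel G w)

/-- Relation generating the identifications coming from zero-weight edges. -/
def zeroRel (G : SimpleGraph V) (w : Sym2 V → ℕ) (x y : V ⊕ InnerVert G w) : Prop :=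
  ∃ u v : V, x = .inl u ∧ y = .inl v ∧ G.Adj u v ∧ w s(u, v) = 0

/-- Vertices of the expanded version `expand(G)`: vertices of the subdivision,
with the two endpoints of each zero-weight edge merged. -/
def ExpandVert (G : SimpleGraph V) (w : Sym2 V → ℕ) : Type _ :=
  Quot (zeroRel G w)

/-- The expanded version `expand(G)` of the weighted graph `(G, w)`, as an
unweighted simple graph. -/
def expandGraph (G : SimpleGraph V) (w : Sym2 V → ℕ) : SimpleGraph (ExpandVert G w) :=
  SimpleGraph.fromRel
    (fun x y => ∃ a b : V ⊕ InnerVert G w,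
      x = Quot.mk _ a ∧ y = Quot.mk _ b ∧ (preExpand G w).Adj a b)

end Expand

/-- `round(G, W)`: decrease every edge weight exceeding `W` down to `W`. -/
def roundW (w : Sym2 V → ℕ) (W : ℕ) : Sym2 V → ℕ := fun e => min (w e) W

/-- If `W` is a positive integer with `W ≥ girth(G)`, then
`girth(round(G, W)) = girth(G)`. -/
theorem wgirth_round_eq {V : Type*} (G : SimpleGraph V) (w : Sym2 V → ℕ)
    (W : ℕ) (hW : 0 < W) (hg : wgirth G w ≤ (W : ℕ∞)) :
    wgirth G (roundW w W) = wgirth G w := by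
  apply le_antisymm
  · -- rounded girth ≤ girth: each cycle gets lighter after rounding
    refine le_sInf ?_
    rintro n ⟨u, p, hp, rfl⟩
    refine le_trans (sInf_le ⟨u, p, hp, rfl⟩) ?_
    exact_mod_cast List.sum_le_sum (fun e _ => min_le_left (w e) W)
  · -- girth ≤ rounded girth
    refine le_sInf ?_
    rintro n ⟨u, p, hp, rfl⟩
    by_cases h : ∀ e ∈ p.edges, w e ≤ W
    · have heq : walkWeight (roundW w W) p = walkWeight w p := by
        unfold walkWeight
        congr 1
        exact List.map_congr_left fun e he => min_eq_left (h e he)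
      rw [heq]
      exact sInf_le ⟨u, p, hp, rfl⟩
    · push_neg at h
      obtain ⟨e, he, hWe⟩ := h
      have : W ≤ walkWeight (roundW w W) p := by
        have : roundW w W e = W := min_eq_right hWe.le
        calc W = roundW w W e := this.symm
          _ ≤ _ := List.single_le_sum (fun _ _ => Nat.zero_le _) _
              (List.mem_map_of_mem he)
      exact le_trans hg (by exact_mod_cast this)
end

section
/- Let T be a dissection tree of G. For each nonleaf vertex S of T with children S' and S'', we have S ⊆ border(S') ∩ border(S'') and border(S) ⊆ border(S') ∪ border(S''). -/
open SimpleGraph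

universe u

variable {V : Type u}

/-- A rooted binary tree whose vertices are labeled by subsets of `V`. -/
inductive DTree (V : Type u) : Type u
  | leaf : Set V → DTree V
  | node : Set V → DTree V → DTree V → DTree V

namespace DTree

/-- `below(S)`: the union of the vertex sets in the subtree rooted at `S`. -/
def belowSet : DTree V → Set V
  | leaf S => S
  | node S l r => S ∪ (l.belowSet ∪ r.belowSet)

end DTree

/-- Node sets `V₁` and `V₂` are dissected by `S` in `G` if no node of `V₁ \ S`
is adjacent to a node of `V₂ \ S`. -/
def Dissects (G : SimpleGraph V) (S V₁ V₂ : Set V) : Prop :=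
  ∀ a ∈ V₁ \ S, ∀ b ∈ V₂ \ S, ¬ G.Adj a b

namespace DTree

/-- Property 2 of a dissection tree: each nonleaf vertex `S` with children `S'`, `S''`
satisfies (a) `S ⊆ below(S') ∩ below(S'')` and (b) `below(S')` and `below(S'')` are
dissected by `S` in `G`. -/
def IsDissection (G : SimpleGraph V) : DTree V → Prop
  | leaf _ => True
  | node S l r =>
      S ⊆ l.belowSet ∩ r.belowSet ∧ Dissects G S l.belowSet r.belowSet ∧
        l.IsDissection G ∧ r.IsDissection G

/-- A dissection tree of `G`: Property 1 (`below(root) = V(G)`) and Property 2. -/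
def IsDissectionTree (G : SimpleGraph V) (t : DTree V) : Prop :=
  t.belowSet = Set.univ ∧ t.IsDissection G

/-- `IsSubtree s t` means `s` occurs as a subtree of `t`, i.e. `s` is a vertex of the
tree `t` (together with everything below it). -/
inductive IsSubtree : DTree V → DTree V → Prop
  | refl (t : DTree V) : IsSubtree t t
  | left {s l r : DTree V} {S : Set V} : IsSubtree s l → IsSubtree s (node S l r)
  | right {s l r : DTree V} {S : Set V} : IsSubtree s r → IsSubtree s (node S l r)

end DTree

namespace DTree

/-- `SubtreeAbove t A s`: the tree `s` occurs as a subtree (vertex) of `t`, and `A`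
is `above(s)`, the union of the ancestor vertex sets of `s` in `t`. -/
inductive SubtreeAbove (t : DTree V) : Set V → DTree V → Prop
  | refl : SubtreeAbove t ∅ t
  | left {A S : Set V} {l r : DTree V} :
      SubtreeAbove t A (node S l r) → SubtreeAbove t (A ∪ S) l
  | right {A S : Set V} {l r : DTree V} :
      SubtreeAbove t A (node S l r) → SubtreeAbove t (A ∪ S) r

/-- `borderOf A s`: the border of the vertex `s`, where `A = above(s)`.  With
`inherit(s) = above(s) ∩ below(s)`, the border of a leaf is `inherit(s)` and the
border of a nonleaf is `s ∪ inherit(s)`. -/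
def borderOf (A : Set V) : DTree V → Set V
  | leaf S => A ∩ S
  | node S l r => S ∪ (A ∩ (node S l r).belowSet)

end DTree

namespace DTree

lemma isDissection_of_subtreeAbove {G : SimpleGraph V} {t : DTree V}
    (ht : t.IsDissection G) {A : Set V} {s : DTree V}
    (h : SubtreeAbove t A s) : s.IsDissection G := by
  induction h with
  | refl => exact ht
  | left _ ih => exact ih.2.2.1
  | right _ ih => exact ih.2.2.2

lemma inter_below_subset_border (A : Set V) (s : DTree V) :
    A ∩ s.belowSet ⊆ borderOf A s := by
  cases s with
  | leaf S => exact subset_rfl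
  | node S l r => exact Set.subset_union_right

end DTree

open DTree in
/-- Let `T` be a dissection tree of `G`.  For each nonleaf vertex
`S` of `T` with children `S'` and `S''`, we have `S ⊆ border(S') ∩ border(S'')`
and `border(S) ⊆ border(S') ∪ border(S'')`. -/
theorem border_subset_of_dissection {V : Type*} (G : SimpleGraph V)
    (t : DTree V) (ht : IsDissectionTree G t)
    (A S : Set V) (l r : DTree V)
    (hsub : SubtreeAbove t A (DTree.node S l r)) :
    S ⊆ borderOf (A ∪ S) l ∩ borderOf (A ∪ S) r ∧
      borderOf A (DTree.node S l r) ⊆ borderOf (A ∪ S) l ∪ borderOf (A ∪ S) r := by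
  have hd : (DTree.node S l r).IsDissection G :=
    isDissection_of_subtreeAbove ht.2 hsub
  have hSl : S ⊆ borderOf (A ∪ S) l := fun x hx =>
    inter_below_subset_border _ _ ⟨Or.inr hx, (hd.1 hx).1⟩
  have hSr : S ⊆ borderOf (A ∪ S) r := fun x hx =>
    inter_below_subset_border _ _ ⟨Or.inr hx, (hd.1 hx).2⟩
  refine ⟨fun x hx => ⟨hSl hx, hSr hx⟩, ?_⟩
  rintro x (hx | ⟨hxA, hxb⟩)
  · exact Or.inl (hSl hx)
  · rcases hxb with hx | hx | hx
    · exact Or.inl (hSl hx)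
    · exact Or.inl (inter_below_subset_border _ _ ⟨Or.inl hxA, hx⟩)
    · exact Or.inr (inter_below_subset_border _ _ ⟨Or.inl hxA, hx⟩)
end
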